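/- Let X be an infinite set of cardinality κ. If f and g are both rich functions on X (surjective, all fibers of cardinality κ, and having κ many p-snails for every p ≥ 0), then f and g are conjugate: there is a bijection γ of X with f = γ⁻¹ ∘ g ∘ γ. -/
import Mathlib


open Cardinal

/-- Cycle-type of a point in the functional graph of `f`. -/
def CycleType {X : Type*} (f : X → X) (x : X) (p : ℕ) : Prop :=
  (p = 0 ∧ Function.Injective fun n : ℕ => f^[n] x) ∨
  (1 ≤ p ∧ (∃ n : ℕ, f^[n] x = f^[n + p] x) ∧
    ∀ q : ℕ, 1 ≤ q → q < p → ¬∃ n : ℕ, f^[n] x = f^[n + q] x)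

/-- Connectedness in the functional graph of `f` (smallest equivalence relation
containing `{(x, f x)}`). -/
def Conn {X : Type*} (f : X → X) : X → X → Prop :=
  Relation.EqvGen fun a b => f a = b

/-- The set of `p`-snails of `f`: connected components of the functional graph of
`f` whose points have cycle-type `p`. -/
def Snails {X : Type*} (f : X → X) (p : ℕ) : Set (Set X) :=
  {C | ∃ x : X, C = {y | Conn f x y} ∧ CycleType f x p}

/-- A function is rich iff it is a generous surjection with `#X` many `p`-snails
for every `p`. -/
def Rich {X : Type*} (f : X → X) : Prop :=
  Function.Surjective f ∧ (∀ y : X, #(f ⁻¹' {y}) = #X) ∧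
    ∀ p : ℕ, #(Snails f p) = #X

section Aux

variable {X : Type*}

lemma iterate_ev_per (f : X → X) {x : X} {k q : ℕ} (h : f^[k] x = f^[k + q] x) :
    ∀ j, k ≤ j → f^[j] x = f^[j + q] x := by
  intro j hj
  have h1 : f^[j] x = f^[(j - k) + k] x := by rw [Nat.sub_add_cancel hj]
  rw [h1, Function.iterate_add_apply, h, ← Function.iterate_add_apply]
  congr 1
  omega

lemma evper_transfer (f : X → X) {x y : X} {m n : ℕ} (h : f^[m] x = f^[n] y)
    {q : ℕ} (hy : ∃ k, f^[k] y = f^[k + q] y) : ∃ k, f^[k] x = f^[k + q] x := by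
  obtain ⟨k, hk⟩ := hy
  refine ⟨m + k, ?_⟩
  have h1 : f^[m + k] x = f^[n + k] y := by
    rw [add_comm m k, Function.iterate_add_apply, h, ← Function.iterate_add_apply,
      add_comm k n]
  have h2 : f^[m + k + q] x = f^[n + k + q] y := by
    rw [show m + k + q = (k + q) + m by ring, Function.iterate_add_apply, h,
      ← Function.iterate_add_apply]
    congr 1
    ring
  rw [h1, h2]
  exact iterate_ev_per f hk (n + k) (by omega)

lemma conn_iff (f : X → X) (x y : X) : Conn f x y ↔ ∃ m n, f^[m] x = f^[n] y := by
  constructor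
  · intro h
    induction h with
    | rel a b hab => exact ⟨1, 0, by simpa using hab⟩
    | refl a => exact ⟨0, 0, rfl⟩
    | symm a b _ ih => obtain ⟨m, n, h⟩ := ih; exact ⟨n, m, h.symm⟩
    | trans a b c _ _ ih1 ih2 =>
        obtain ⟨m, n, h1⟩ := ih1
        obtain ⟨m', n', h2⟩ := ih2
        refine ⟨m + m', n' + n, ?_⟩
        calc f^[m + m'] a = f^[m'] (f^[m] a) := by
              rw [add_comm, Function.iterate_add_apply]
          _ = f^[m'] (f^[n] b) := by rw [h1]
          _ = f^[n] (f^[m'] b) := by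
              rw [← Function.iterate_add_apply, add_comm, Function.iterate_add_apply]
          _ = f^[n] (f^[n'] c) := by rw [h2]
          _ = f^[n' + n] c := by rw [add_comm n' n, Function.iterate_add_apply]
  · rintro ⟨m, n, h⟩
    have key : ∀ (z : X) (k : ℕ), Conn f z (f^[k] z) := by
      intro z k
      induction k with
      | zero => exact Relation.EqvGen.refl z
      | succ k ih =>
          refine Relation.EqvGen.trans _ _ _ ih (Relation.EqvGen.rel _ _ ?_)
          exact (Function.iterate_succ_apply' f k z).symm
    have h1 : Conn f x (f^[n] y) := h ▸ key x m
    exact Relation.EqvGen.trans _ _ _ h1 (Relation.EqvGen.symm _ _ (key y n))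

lemma cycleType_exists (f : X → X) (x : X) : ∃ p, CycleType f x p := by
  classical
  by_cases h : Function.Injective fun n : ℕ => f^[n] x
  · exact ⟨0, Or.inl ⟨rfl, h⟩⟩
  · have hex : ∃ q, 1 ≤ q ∧ ∃ n, f^[n] x = f^[n + q] x := by
      unfold Function.Injective at h
      push_neg at h
      obtain ⟨a, b, hab, hne⟩ := h
      rcases Nat.lt_or_ge a b with hlt | hge
      · exact ⟨b - a, by omega, a, by rw [hab]; congr 1; omega⟩
      · exact ⟨a - b, by omega, b, by rw [← hab]; congr 1; omega⟩
    refine ⟨Nat.find hex, Or.inr ⟨(Nat.find_spec hex).1, (Nat.find_spec hex).2, ?_⟩⟩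
    intro q hq1 hq2 hqn
    exact Nat.find_min hex hq2 ⟨hq1, hqn⟩

lemma cycleType_unique {f : X → X} {x : X} {p q : ℕ} (hp : CycleType f x p)
    (hq : CycleType f x q) : p = q := by
  rcases hp with ⟨hp0, hpinj⟩ | ⟨hp1, ⟨k, hk⟩, hpmin⟩ <;>
    rcases hq with ⟨hq0, hqinj⟩ | ⟨hq1, ⟨k', hk'⟩, hqmin⟩
  · omega
  · have := hpinj hk'
    omega
  · have := hqinj hk
    omega
  · rcases lt_trichotomy p q with h1 | h1 | h1
    · exact absurd ⟨k, hk⟩ (hqmin p hp1 h1)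
    · exact h1
    · exact absurd ⟨k', hk'⟩ (hpmin q hq1 h1)

lemma cycleType_conn {f : X → X} {x y : X} (h : Conn f x y) {p : ℕ}
    (hp : CycleType f x p) : CycleType f y p := by
  obtain ⟨m, n, hmn⟩ := (conn_iff f x y).mp h
  obtain ⟨q, hq⟩ := cycleType_exists f y
  suffices hpq : p = q by rw [hpq]; exact hq
  rcases hp with ⟨hp0, hpinj⟩ | ⟨hp1, ⟨k, hk⟩, hpmin⟩
  · rcases hq with ⟨hq0, _⟩ | ⟨hq1, hqex, _⟩
    · omega
    · exfalso
      obtain ⟨k', hk'⟩ := evper_transfer f hmn hqex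
      have := hpinj hk'
      omega
  · rcases hq with ⟨hq0, hqinj⟩ | ⟨hq1, ⟨k', hk'⟩, hqmin⟩
    · exfalso
      obtain ⟨k', hk'⟩ := evper_transfer f hmn.symm ⟨k, hk⟩
      have := hqinj hk'
      omega
    · rcases lt_trichotomy p q with h1 | h1 | h1
      · exact absurd (evper_transfer f hmn.symm ⟨k, hk⟩) (hqmin p hp1 h1)
      · exact h1
      · exact absurd (evper_transfer f hmn ⟨k', hk'⟩) (hpmin q hq1 h1)

lemma diff_card [Infinite X] {A B : Set X} (hA : #A = #X) (hB : (A ∩ B).Subsingleton) :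
    #(A \ B : Set X) = #X := by
  refine le_antisymm (Cardinal.mk_set_le _) ?_
  have hsub : A ⊆ (A \ B) ∪ (A ∩ B) := by
    intro z hz
    by_cases hzB : z ∈ B <;> simp [hz, hzB]
  have h1 : #A ≤ #(A \ B : Set X) + #(A ∩ B : Set X) :=
    (Cardinal.mk_le_mk_of_subset hsub).trans (Cardinal.mk_union_le _ _)
  have h2 : #(A ∩ B : Set X) ≤ 1 := hB.cardinalMk_le_one
  have h3 : #X ≤ #(A \ B : Set X) + 1 := by
    calc #X = #A := hA.symm
      _ ≤ #(A \ B : Set X) + #(A ∩ B : Set X) := h1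
      _ ≤ #(A \ B : Set X) + 1 := by gcongr
  by_cases hfin : ℵ₀ ≤ #(A \ B : Set X)
  · rwa [Cardinal.add_one_eq hfin] at h3
  · exfalso
    push_neg at hfin
    have : #X < ℵ₀ := h3.trans_lt (Cardinal.add_lt_aleph0 hfin Cardinal.one_lt_aleph0)
    exact absurd (Cardinal.aleph0_le_mk X) (not_le.mpr this)

/-- Canonical dynamics on one `p`-snail model. -/
def Fcomp {K : Type*} (p : ℕ) : ZMod p × List K → ZMod p × List K
  | (i, []) => (i + 1, [])
  | (i, _ :: l) => (i, l)

lemma component_model [Infinite X] {f : X → X} (hf : Rich f) {p : ℕ} {x₀ : X}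
    (hx : CycleType f x₀ p) :
    ∃ Φ : ZMod p × List X → X, Function.Injective Φ ∧ (∀ m, Conn f x₀ (Φ m)) ∧
      (∀ y, Conn f x₀ y → ∃ m, Φ m = y) ∧ (∀ m, f (Φ m) = Φ (Fcomp p m)) := by
  classical
  obtain ⟨s, hs1, hsinj, hsconn, hreach⟩ :
      ∃ s : ZMod p → X, (∀ i, f (s i) = s (i + 1)) ∧ Function.Injective s ∧
        (∀ i, Conn f x₀ (s i)) ∧ (∀ y, Conn f x₀ y → ∃ d, f^[d] y ∈ Set.range s) := by
    rcases hx with ⟨hp0, hpinj⟩ | ⟨hp1, hper, hpmin⟩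
    · -- p = 0 : the spine is a ℤ-line
      subst hp0
      set u := Function.surjInv hf.1 with hu_def
      have hu : ∀ y, f (u y) = y := fun y => Function.surjInv_eq hf.1 y
      set t : ℤ → X := fun n => if 0 ≤ n then f^[n.toNat] x₀ else u^[(-n).toNat] x₀ with ht
      have htpos : ∀ n : ℤ, 0 ≤ n → t n = f^[n.toNat] x₀ := by
        intro n hn
        simp only [ht]
        rw [if_pos hn]
      have htneg : ∀ n : ℤ, n < 0 → t n = u^[(-n).toNat] x₀ := by
        intro n hn
        simp only [ht]
        rw [if_neg (by omega)]
      have htnat : ∀ k : ℕ, t (k : ℤ) = f^[k] x₀ := by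
        intro k
        rw [htpos _ (by omega)]
        norm_num
      have hstep : ∀ n : ℤ, f (t n) = t (n + 1) := by
        intro n
        rcases le_or_gt 0 n with hn | hn
        · rw [htpos n hn, htpos (n + 1) (by omega),
            show (n + 1).toNat = n.toNat + 1 by omega, Function.iterate_succ_apply']
        · have h2 : f (t n) = u^[(-n).toNat - 1] x₀ := by
            have h3 : t n = u^[((-n).toNat - 1) + 1] x₀ := by
              rw [htneg n hn]
              congr 1
              omega
            rw [h3, Function.iterate_succ_apply', hu]
          rcases eq_or_lt_of_le (by omega : n + 1 ≤ 0) with he | hlt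
          · have h0 : t (n + 1) = x₀ := by
              rw [he]
              simpa using htnat 0
            rw [h2, show (-n).toNat - 1 = 0 by omega, h0]
            rfl
          · rw [h2, htneg (n + 1) hlt]
            congr 1
            omega
      have hiter : ∀ (n : ℤ) (k : ℕ), f^[k] (t n) = t (n + k) := by
        intro n k
        induction k with
        | zero => simp
        | succ k ih =>
            rw [Function.iterate_succ_apply', ih, hstep]
            congr 1
            push_cast
            ring
      have htinj : Function.Injective t := by
        intro a b hab
        set k : ℕ := a.natAbs + b.natAbs with hkdef
        have h1 : f^[k] (t a) = f^[k] (t b) := by rw [hab]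
        rw [hiter, hiter] at h1
        have ha' : a + (k : ℤ) = ((a + k).toNat : ℤ) := by omega
        have hb' : b + (k : ℤ) = ((b + k).toNat : ℤ) := by omega
        rw [ha', hb', htnat, htnat] at h1
        have := hpinj h1
        omega
      have hconn' : ∀ i : ℤ, Conn f x₀ (t i) := by
        intro i
        refine (conn_iff f x₀ (t i)).mpr ⟨(i + ((-i).toNat : ℤ)).toNat, (-i).toNat, ?_⟩
        rw [hiter, ← htnat]
        congr 1
        omega
      have hreach' : ∀ y, Conn f x₀ y → ∃ d : ℕ, f^[d] y ∈ Set.range t := by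
        intro y hy
        obtain ⟨m, n, hmn⟩ := (conn_iff f x₀ y).mp hy
        exact ⟨n, (m : ℤ), (htnat m).trans hmn⟩
      exact ⟨t, hstep, htinj, hconn', hreach'⟩
    · -- p ≥ 1 : the spine is a p-cycle
      haveI : NeZero p := ⟨by omega⟩
      obtain ⟨n₀, hn₀⟩ := hper
      set z := f^[n₀] x₀ with hz_def
      have hz : f^[p] z = z := by
        rw [hz_def, ← Function.iterate_add_apply, add_comm, ← hn₀]
      have hzmul : ∀ q : ℕ, f^[p * q] z = z := by
        intro q
        induction q with
        | zero => simp
        | succ q ih =>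
            rw [Nat.mul_succ, Function.iterate_add_apply, hz, ih]
      have hzk : ∀ k : ℕ, f^[k] z = f^[k % p] z := by
        intro k
        conv_lhs => rw [show k = k % p + p * (k / p) from (Nat.mod_add_div k p).symm]
        rw [Function.iterate_add_apply, hzmul]
      have hbase : ∀ a : ℕ, f^[a + n₀] x₀ = f^[a] z := by
        intro a
        rw [Function.iterate_add_apply]
      have hvalinj : ∀ a b : ℕ, a < p → b < p → f^[a] z = f^[b] z → a = b := by
        intro a b ha hb hab
        by_contra hne
        rcases Nat.lt_or_ge a b with hlt | hge
        · refine hpmin (b - a) (by omega) (by omega) ⟨a + n₀, ?_⟩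
          rw [hbase, show a + n₀ + (b - a) = b + n₀ by omega, hbase, hab]
        · have hlt : b < a := by omega
          refine hpmin (a - b) (by omega) (by omega) ⟨b + n₀, ?_⟩
          rw [hbase, show b + n₀ + (a - b) = a + n₀ by omega, hbase, hab]
      refine ⟨fun i => f^[i.val] z, ?_, ?_, ?_, ?_⟩
      · intro i
        show f (f^[i.val] z) = f^[(i + 1).val] z
        have h1 : (i + 1).val = (i.val + 1) % p := by
          have e1 : ((i.val + 1 : ℕ) : ZMod p) = i + 1 := by
            push_cast
            rw [ZMod.natCast_rightInverse i]
          rw [← e1, ZMod.val_natCast]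
        rw [h1, ← hzk, Function.iterate_succ_apply']
      · intro i j hij
        have hij' : f^[i.val] z = f^[j.val] z := hij
        exact ZMod.val_injective p (hvalinj i.val j.val (ZMod.val_lt i) (ZMod.val_lt j) hij')
      · intro i
        exact (conn_iff f x₀ _).mpr ⟨i.val + n₀, 0, hbase i.val⟩
      · intro y hy
        obtain ⟨m, n, hmn⟩ := (conn_iff f x₀ y).mp hy
        refine ⟨n₀ + n, ⟨(m : ZMod p), ?_⟩⟩
        show f^[((m : ZMod p)).val] z = f^[n₀ + n] y
        rw [ZMod.val_natCast, ← hzk, ← hbase, show m + n₀ = n₀ + m by omega,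
          Function.iterate_add_apply, hmn, ← Function.iterate_add_apply]
  set S := Set.range s with hS
  have hChcard : ∀ y : X, #(f ⁻¹' {y} \ S : Set X) = #X := by
    intro y
    refine diff_card (hf.2.1 y) ?_
    rintro z1 ⟨hz1, i1, rfl⟩ z2 ⟨hz2, i2, rfl⟩
    have e1 : s (i1 + 1) = y := by rw [← hs1]; exact hz1
    have e2 : s (i2 + 1) = y := by rw [← hs1]; exact hz2
    have h12 : i1 + 1 = i2 + 1 := hsinj (e1.trans e2.symm)
    have : i1 = i2 := by
      have := add_right_cancel h12
      exact this
    rw [this]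
  have hch : ∀ y : X, Nonempty (X ≃ (f ⁻¹' {y} \ S : Set X)) := fun y =>
    Cardinal.eq.mp (hChcard y).symm
  let c : X → X → X := fun y a => ((hch y).some a : X)
  have hc_mem : ∀ y a, c y a ∈ f ⁻¹' {y} \ S := fun y a => ((hch y).some a).2
  have hc1 : ∀ y a, f (c y a) = y := fun y a => (hc_mem y a).1
  have hc2 : ∀ y a, c y a ∉ S := fun y a => (hc_mem y a).2
  have hc3 : ∀ y, Function.Injective (c y) := fun y a b hab =>
    (hch y).some.injective (Subtype.ext hab)
  have hc4 : ∀ y z, f z = y → z ∉ S → ∃ a, c y a = z := by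
    intro y z hz hzs
    refine ⟨(hch y).some.symm ⟨z, hz, hzs⟩, ?_⟩
    show (((hch y).some ((hch y).some.symm ⟨z, hz, hzs⟩)) : X) = z
    rw [Equiv.apply_symm_apply]
  set Φ : ZMod p × List X → X := fun m => m.2.foldr (fun a y => c y a) (s m.1) with hΦ
  have hΦnil : ∀ i, Φ (i, []) = s i := fun i => rfl
  have hΦcons : ∀ i a l, Φ (i, a :: l) = c (Φ (i, l)) a := fun i a l => rfl
  have hconj : ∀ m, f (Φ m) = Φ (Fcomp p m) := by
    rintro ⟨i, _ | ⟨a, l⟩⟩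
    · exact hs1 i
    · exact hc1 _ a
  have hΦconn : ∀ m, Conn f x₀ (Φ m) := by
    rintro ⟨i, l⟩
    induction l with
    | nil => exact hsconn i
    | cons a l ih =>
        have h1 : Conn f (Φ (i, a :: l)) (Φ (i, l)) := Relation.EqvGen.rel _ _ (hc1 _ a)
        exact Relation.EqvGen.trans _ _ _ ih (Relation.EqvGen.symm _ _ h1)
  have key : ∀ (l m : List X) (i j : ZMod p), Φ (i, l) = Φ (j, m) → i = j ∧ l = m := by
    intro l
    induction l with
    | nil =>
        intro m i j h
        cases m with
        | nil => exact ⟨hsinj h, rfl⟩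
        | cons b m => exact absurd ⟨i, h⟩ (hc2 _ b)
    | cons a l ih =>
        intro m i j h
        cases m with
        | nil => exact absurd ⟨j, h.symm⟩ (hc2 _ a)
        | cons b m =>
            have hf' : Φ (i, l) = Φ (j, m) := by
              have hcg := congrArg f h
              rwa [hΦcons, hΦcons, hc1, hc1] at hcg
            obtain ⟨hij, hlm⟩ := ih m i j hf'
            rw [hΦcons, hΦcons, ← hf'] at h
            have hab : a = b := hc3 _ h
            exact ⟨hij, by rw [hab, hlm]⟩
  have hΦinj : Function.Injective Φ := by
    rintro ⟨i, l⟩ ⟨j, m⟩ h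
    obtain ⟨h1, h2⟩ := key l m i j h
    rw [h1, h2]
  have hΦsurj : ∀ y, Conn f x₀ y → ∃ m, Φ m = y := by
    have main : ∀ (d : ℕ) (y : X), Conn f x₀ y → f^[d] y ∈ S → ∃ m, Φ m = y := by
      intro d
      induction d with
      | zero =>
          intro y hy hyS
          obtain ⟨i, hi⟩ := hyS
          exact ⟨(i, []), hi⟩
      | succ d ih =>
          intro y hy hyS
          by_cases hyS0 : y ∈ S
          · obtain ⟨i, hi⟩ := hyS0
            exact ⟨(i, []), hi⟩
          · have hfy : Conn f x₀ (f y) :=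
              Relation.EqvGen.trans _ _ _ hy (Relation.EqvGen.rel _ _ rfl)
            have hS' : f^[d] (f y) ∈ S := by
              rw [← Function.iterate_succ_apply]
              exact hyS
            obtain ⟨⟨i, l⟩, hm⟩ := ih (f y) hfy hS'
            obtain ⟨a, ha⟩ := hc4 (Φ (i, l)) y (by rw [hm]) hyS0
            exact ⟨(i, a :: l), ha⟩
    intro y hy
    obtain ⟨d, hd⟩ := hreach y hy
    exact main d y hy hd
  exact ⟨Φ, hΦinj, hΦconn, hΦsurj, hconj⟩

lemma rich_model [Infinite X] {f : X → X} (hf : Rich f) :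
    ∃ e : (Σ p : ℕ, X × (ZMod p × List X)) ≃ X,
      ∀ y, f (e y) = e ⟨y.1, y.2.1, Fcomp y.1 y.2.2⟩ := by
  classical
  have hE : ∀ p : ℕ, Nonempty (X ≃ Snails f p) := fun p => Cardinal.eq.mp (hf.2.2 p).symm
  let E : ∀ p : ℕ, X ≃ Snails f p := fun p => (hE p).some
  have hbase : ∀ (p : ℕ) (C : Snails f p),
      ∃ x, (C : Set X) = {y | Conn f x y} ∧ CycleType f x p := fun p C => C.2
  let base : ∀ (p : ℕ), Snails f p → X := fun p C => (hbase p C).choose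
  have hbase1 : ∀ (p : ℕ) (C : Snails f p), (C : Set X) = {y | Conn f (base p C) y} := fun p C =>
    (hbase p C).choose_spec.1
  have hbase2 : ∀ p C, CycleType f (base p C) p := fun p C => (hbase p C).choose_spec.2
  have hΦex : ∀ (p : ℕ) (C : Snails f p), ∃ Φ : ZMod p × List X → X,
      Function.Injective Φ ∧ (∀ m, Conn f (base p C) (Φ m)) ∧
      (∀ y, Conn f (base p C) y → ∃ m, Φ m = y) ∧
      (∀ m, f (Φ m) = Φ (Fcomp p m)) := fun p C => component_model hf (hbase2 p C)
  choose Φ hinj hconn hsurj hcj using hΦex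
  let Ψ : (Σ p : ℕ, X × (ZMod p × List X)) → X := fun y => Φ y.1 (E y.1 y.2.1) y.2.2
  have hΨinj : Function.Injective Ψ := by
    rintro ⟨p, c, m⟩ ⟨p', c', m'⟩ h
    simp only [Ψ] at h
    have hw1 : Conn f (base p (E p c)) (Φ p (E p c) m) := hconn _ _ _
    have hw2 : Conn f (base p' (E p' c')) (Φ p (E p c) m) := h ▸ hconn p' (E p' c') m'
    have hbb : Conn f (base p (E p c)) (base p' (E p' c')) :=
      Relation.EqvGen.trans _ _ _ hw1 (Relation.EqvGen.symm _ _ hw2)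
    have hpp : p = p' :=
      cycleType_unique (cycleType_conn hbb (hbase2 p (E p c))) (hbase2 p' (E p' c'))
    subst hpp
    have hCC : E p c = E p c' := by
      apply Subtype.ext
      rw [hbase1 p (E p c), hbase1 p (E p c')]
      ext y
      exact ⟨fun hy => Relation.EqvGen.trans _ _ _ (Relation.EqvGen.symm _ _ hbb) hy,
             fun hy => Relation.EqvGen.trans _ _ _ hbb hy⟩
    have hcc : c = c' := (E p).injective hCC
    subst hcc
    have hmm : m = m' := hinj p (E p c) h
    subst hmm
    rfl
  have hΨsurj : Function.Surjective Ψ := by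
    intro x
    obtain ⟨p, hp⟩ := cycleType_exists f x
    have hCmem : {y | Conn f x y} ∈ Snails f p := ⟨x, rfl, hp⟩
    set C : Snails f p := ⟨_, hCmem⟩ with hC
    have hxC : Conn f (base p C) x := by
      have hx : x ∈ (C : Set X) := Relation.EqvGen.refl x
      rwa [hbase1 p C] at hx
    obtain ⟨m, hm⟩ := hsurj p C x hxC
    refine ⟨⟨p, (E p).symm C, m⟩, ?_⟩
    show Φ p (E p ((E p).symm C)) m = x
    rw [Equiv.apply_symm_apply]
    exact hm
  refine ⟨Equiv.ofBijective Ψ ⟨hΨinj, hΨsurj⟩, ?_⟩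
  rintro ⟨p, c, m⟩
  exact hcj p (E p c) m

end Aux

theorem stmt_12 {X : Type*} [Infinite X] (f g : X → X)
    (hf : Rich f) (hg : Rich g) :
    ∃ γ : Equiv.Perm X, f = ⇑γ.symm ∘ g ∘ ⇑γ := by
  obtain ⟨ef, hef⟩ := rich_model hf
  obtain ⟨eg, heg⟩ := rich_model hg
  refine ⟨ef.symm.trans eg, ?_⟩
  funext x
  show f x = ef (eg.symm (g (eg (ef.symm x))))
  calc f x = f (ef (ef.symm x)) := by rw [Equiv.apply_symm_apply]
    _ = ef ⟨(ef.symm x).1, (ef.symm x).2.1, Fcomp (ef.symm x).1 (ef.symm x).2.2⟩ :=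
        hef (ef.symm x)
    _ = ef (eg.symm (eg ⟨(ef.symm x).1, (ef.symm x).2.1, Fcomp (ef.symm x).1 (ef.symm x).2.2⟩)) := by
        rw [Equiv.symm_apply_apply]
    _ = ef (eg.symm (g (eg (ef.symm x)))) := by rw [heg (ef.symm x)]
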